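/- Let Q be an n×n real matrix and θ a 1×n real row vector such that the pair (Q, θ) is observable, i.e. for vectors w, the condition θ·exp(tQ)·w = 0 for all t ≥ 0 implies w = 0. Let F be an m×m matrix and φ a 1×m row vector with (F, φ) observable. Suppose for each w⁰ ∈ ℝⁿ there exists z⁰ ∈ ℝᵐ with φ·exp(tF)·z⁰ = θ·exp(tQ)·w⁰ for all t ≥ 0. Then the map T sending w⁰ to the unique such z⁰ is a well-defined injective linear map satisfying F·T = T·Q. -/

import Mathlib

open Matrix NormedSpace

/-- Observability of a pair `(A, c)`. -/
def Observable {n : ℕ} (A : Matrix (Fin n) (Fin n) ℝ) (c : Fin n → ℝ) : Prop :=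
  ∀ v : Fin n → ℝ, (∀ t : ℝ, 0 ≤ t → c ⬝ᵥ (NormedSpace.exp (t • A)) *ᵥ v = 0) → v = 0

section Aux

attribute [local instance] Matrix.linftyOpNormedRing Matrix.linftyOpNormedAlgebra

noncomputable def obsCLM {m : ℕ} (φ v : Fin m → ℝ) : Matrix (Fin m) (Fin m) ℝ →L[ℝ] ℝ :=
  LinearMap.toContinuousLinearMap
    { toFun := fun M => φ ⬝ᵥ M *ᵥ v
      map_add' := by intro M N; simp [Matrix.add_mulVec, dotProduct_add]
      map_smul' := by intro c M; simp [Matrix.smul_mulVec, dotProduct_smul] }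

lemma obs_hasDerivAt {m : ℕ} (F : Matrix (Fin m) (Fin m) ℝ) (φ v : Fin m → ℝ) (t : ℝ) :
    HasDerivAt (fun s : ℝ => φ ⬝ᵥ (exp (s • F)) *ᵥ v)
      (φ ⬝ᵥ (exp (t • F)) *ᵥ (F *ᵥ v)) t := by
  have h := (obsCLM φ v).hasFDerivAt.comp_hasDerivAt t (hasDerivAt_exp_smul_const F t)
  have he : (obsCLM φ v) (exp (t • F) * F) = φ ⬝ᵥ (exp (t • F)) *ᵥ (F *ᵥ v) := by
    simp [obsCLM, Matrix.mulVec_mulVec]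
  replace h := h.congr_deriv he
  exact h

lemma obs_cont {m : ℕ} (F : Matrix (Fin m) (Fin m) ℝ) (φ v : Fin m → ℝ) :
    Continuous (fun s : ℝ => φ ⬝ᵥ (exp (s • F)) *ᵥ v) :=
  continuous_iff_continuousAt.2 fun t => (obs_hasDerivAt F φ v t).continuousAt

end Aux

lemma obs_uniq {m : ℕ} {F : Matrix (Fin m) (Fin m) ℝ} {φ : Fin m → ℝ}
    (hFφ : Observable F φ) {z z' : Fin m → ℝ}
    (h : ∀ t : ℝ, 0 ≤ t → φ ⬝ᵥ (exp (t • F)) *ᵥ z = φ ⬝ᵥ (exp (t • F)) *ᵥ z') :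
    z = z' := by
  have := hFφ (z - z') (fun t ht => by
    rw [Matrix.mulVec_sub, dotProduct_sub, h t ht, sub_self])
  exact sub_eq_zero.1 this

theorem stmt_3 {n m : ℕ}
    (Q : Matrix (Fin n) (Fin n) ℝ) (θ : Fin n → ℝ)
    (F : Matrix (Fin m) (Fin m) ℝ) (φ : Fin m → ℝ)
    (hQθ : Observable Q θ) (hFφ : Observable F φ)
    (hmatch : ∀ w₀ : Fin n → ℝ, ∃ z₀ : Fin m → ℝ,
      ∀ t : ℝ, 0 ≤ t →
        φ ⬝ᵥ (NormedSpace.exp (t • F)) *ᵥ z₀ = θ ⬝ᵥ (NormedSpace.exp (t • Q)) *ᵥ w₀) :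
    ∃ T : (Fin n → ℝ) →ₗ[ℝ] (Fin m → ℝ),
      Function.Injective T ∧
      (∀ w₀ : Fin n → ℝ, ∀ t : ℝ, 0 ≤ t →
        φ ⬝ᵥ (NormedSpace.exp (t • F)) *ᵥ (T w₀) = θ ⬝ᵥ (NormedSpace.exp (t • Q)) *ᵥ w₀) ∧
      (∀ w₀ : Fin n → ℝ, F *ᵥ (T w₀) = T (Q *ᵥ w₀)) := by
  classical
  set T₀ : (Fin n → ℝ) → (Fin m → ℝ) := fun w => Classical.choose (hmatch w) with hT₀
  have hT : ∀ w, ∀ t : ℝ, 0 ≤ t →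
      φ ⬝ᵥ (exp (t • F)) *ᵥ (T₀ w) = θ ⬝ᵥ (exp (t • Q)) *ᵥ w :=
    fun w => Classical.choose_spec (hmatch w)
  have hadd : ∀ w w', T₀ (w + w') = T₀ w + T₀ w' := by
    intro w w'
    refine obs_uniq hFφ fun t ht => ?_
    rw [hT _ t ht, Matrix.mulVec_add, dotProduct_add, Matrix.mulVec_add,
      dotProduct_add, hT _ t ht, hT _ t ht]
  have hsmul : ∀ (c : ℝ) w, T₀ (c • w) = c • T₀ w := by
    intro c w
    refine obs_uniq hFφ fun t ht => ?_
    rw [hT _ t ht, Matrix.mulVec_smul, dotProduct_smul, Matrix.mulVec_smul,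
      dotProduct_smul, hT _ t ht]
  set T : (Fin n → ℝ) →ₗ[ℝ] (Fin m → ℝ) :=
    { toFun := T₀, map_add' := hadd, map_smul' := hsmul } with hTdef
  refine ⟨T, ?_, fun w t ht => hT w t ht, ?_⟩
  · rw [injective_iff_map_eq_zero]
    intro w hw
    refine hQθ w fun t ht => ?_
    have := hT w t ht
    rw [show T₀ w = (0 : Fin m → ℝ) from hw] at this
    simpa using this.symm
  · intro w
    -- key: φ exp(tF) (F T w) = θ exp(tQ) (Q w) for all t ≥ 0
    have key : ∀ t : ℝ, 0 ≤ t →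
        φ ⬝ᵥ (exp (t • F)) *ᵥ (F *ᵥ T₀ w) = θ ⬝ᵥ (exp (t • Q)) *ᵥ (Q *ᵥ w) := by
      have hpos : ∀ t : ℝ, 0 < t →
          φ ⬝ᵥ (exp (t • F)) *ᵥ (F *ᵥ T₀ w) = θ ⬝ᵥ (exp (t • Q)) *ᵥ (Q *ᵥ w) := by
        intro t ht
        set g : ℝ → ℝ := fun s =>
          φ ⬝ᵥ (exp (s • F)) *ᵥ (T₀ w) - θ ⬝ᵥ (exp (s • Q)) *ᵥ w with hg
        have hgd : HasDerivAt g
            (φ ⬝ᵥ (exp (t • F)) *ᵥ (F *ᵥ T₀ w) - θ ⬝ᵥ (exp (t • Q)) *ᵥ (Q *ᵥ w)) t :=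
          (obs_hasDerivAt F φ (T₀ w) t).sub (obs_hasDerivAt Q θ w t)
        have hzero : ∀ᶠ s in nhds t, g s = 0 := by
          filter_upwards [eventually_gt_nhds ht] with s hs
          rw [hg]
          simp only
          rw [hT w s hs.le, sub_self]
        have : HasDerivAt g 0 t :=
          (hasDerivAt_const t (0 : ℝ)).congr_of_eventuallyEq hzero
        have := hgd.unique this
        linarith [this]
      intro t ht
      rcases eq_or_lt_of_le ht with rfl | htpos
      · -- t = 0 : by continuity from t > 0
        have hc : ContinuousAt (fun s : ℝ =>
            φ ⬝ᵥ (exp (s • F)) *ᵥ (F *ᵥ T₀ w) - θ ⬝ᵥ (exp (s • Q)) *ᵥ (Q *ᵥ w)) 0 :=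
          ((obs_cont F φ (F *ᵥ T₀ w)).sub (obs_cont Q θ (Q *ᵥ w))).continuousAt
        have h1 : Filter.Tendsto (fun s : ℝ =>
            φ ⬝ᵥ (exp (s • F)) *ᵥ (F *ᵥ T₀ w) - θ ⬝ᵥ (exp (s • Q)) *ᵥ (Q *ᵥ w))
            (nhdsWithin 0 (Set.Ioi 0))
            (nhds (φ ⬝ᵥ (exp ((0:ℝ) • F)) *ᵥ (F *ᵥ T₀ w)
              - θ ⬝ᵥ (exp ((0:ℝ) • Q)) *ᵥ (Q *ᵥ w))) :=
          hc.continuousWithinAt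
        have h2 : Filter.Tendsto (fun s : ℝ =>
            φ ⬝ᵥ (exp (s • F)) *ᵥ (F *ᵥ T₀ w) - θ ⬝ᵥ (exp (s • Q)) *ᵥ (Q *ᵥ w))
            (nhdsWithin 0 (Set.Ioi 0)) (nhds 0) := by
          refine Filter.Tendsto.congr' ?_ tendsto_const_nhds
          filter_upwards [self_mem_nhdsWithin] with s hs
          exact (sub_eq_zero.2 (hpos s hs)).symm
        have := tendsto_nhds_unique h1 h2
        exact sub_eq_zero.1 this
      · exact hpos t htpos
    -- now use uniqueness
    refine obs_uniq hFφ fun t ht => ?_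
    show φ ⬝ᵥ (exp (t • F)) *ᵥ (F *ᵥ T₀ w) = φ ⬝ᵥ (exp (t • F)) *ᵥ (T₀ (Q *ᵥ w))
    rw [key t ht, hT (Q *ᵥ w) t ht]
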